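/- Let W be an n × n real matrix such that every off-diagonal entry of W is nonnegative, every diagonal entry is nonpositive, and each row of W sums to zero. Then there exists a nonzero vector c ∈ ℝ^n with c ≥ 0 (componentwise) such that W^T c = 0. -/

import Mathlib

open Matrix

/-- Auxiliary: there is no vector `y` with `W *ᵥ y` strictly positive. -/
lemma stmt_1_aux (n : ℕ) (hn : 0 < n) (W : Matrix (Fin n) (Fin n) ℝ)
    (hoff : ∀ i j, i ≠ j → 0 ≤ W i j)
    (hrow : ∀ i, ∑ j, W i j = 0) :
    ¬ ∃ y : Fin n → ℝ, ∀ i, 0 < W.mulVec y i := by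
  rintro ⟨y, hy⟩
  haveI : Nonempty (Fin n) := ⟨⟨0, hn⟩⟩
  obtain ⟨i, -, hi⟩ := Finset.exists_max_image Finset.univ y ⟨⟨0, hn⟩, Finset.mem_univ _⟩
  have h1 : W.mulVec y i ≤ ∑ j, W i j * y i := by
    rw [Matrix.mulVec, dotProduct]
    refine Finset.sum_le_sum fun j _ => ?_
    rcases eq_or_ne j i with rfl | hji
    · exact le_rfl
    · exact mul_le_mul_of_nonneg_left (hi j (Finset.mem_univ _)) (hoff i j hji.symm)
  rw [← Finset.sum_mul, hrow i, zero_mul] at h1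
  exact absurd h1 (not_le.mpr (hy i))

/-- If W has nonnegative off-diagonal entries, nonpositive diagonal entries and zero
row sums, then there is a nonzero nonnegative c with Wᵀ c = 0. -/
theorem stmt_1 (n : ℕ) (hn : 0 < n) (W : Matrix (Fin n) (Fin n) ℝ)
    (hoff : ∀ i j, i ≠ j → 0 ≤ W i j)
    (hdiag : ∀ i, W i i ≤ 0)
    (hrow : ∀ i, ∑ j, W i j = 0) :
    ∃ c : Fin n → ℝ, c ≠ 0 ∧ (∀ i, 0 ≤ c i) ∧ Wᵀ.mulVec c = 0 := by
  classical
  set L : (Fin n → ℝ) →ₗ[ℝ] (Fin n → ℝ) := Matrix.mulVecLin Wᵀ with hL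
  set K : Set (Fin n → ℝ) := L '' stdSimplex ℝ (Fin n) with hK
  have hKc : IsCompact K :=
    (isCompact_stdSimplex _ _).image (LinearMap.continuous_of_finiteDimensional L)
  have hKconv : Convex ℝ K := (convex_stdSimplex ℝ _).linear_image L
  by_cases h0 : (0 : Fin n → ℝ) ∈ K
  · obtain ⟨c, hc, hc0⟩ := h0
    refine ⟨c, ?_, hc.1, hc0⟩
    intro h
    have h2 := hc.2
    rw [h] at h2
    simp at h2
  · exfalso
    obtain ⟨f, u, hu0, hu⟩ := geometric_hahn_banach_point_closed hKconv hKc.isClosed h0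
    have hupos : 0 < u := by simpa using hu0
    set y : Fin n → ℝ := fun i => f (Pi.single i 1) with hy
    refine stmt_1_aux n hn W hoff hrow ⟨y, fun j => ?_⟩
    have hmem : L (Pi.single j 1) ∈ K := ⟨_, single_mem_stdSimplex ℝ j, rfl⟩
    have h3 : u < f (L (Pi.single j 1)) := hu _ hmem
    have h4 : L (Pi.single j 1) = W j := by
      simp [hL, Matrix.mulVecLin_apply, Matrix.mulVec_single_one]
      rfl
    have h5 : f (W j) = W.mulVec y j := by
      have : (W j : Fin n → ℝ) = ∑ i, W j i • (Pi.single i (1 : ℝ) : Fin n → ℝ) := by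
        simp_rw [← Pi.single_smul', smul_eq_mul, mul_one]
        exact (Finset.univ_sum_single (W j)).symm
      rw [this, map_sum]
      simp only [_root_.map_smul, smul_eq_mul]
      rfl
    rw [h4, h5] at h3
    exact lt_trans hupos h3
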